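/- Let ℓ > 0 and Σ = {a,b}. For L_ℓ = Σ^ℓ (all words of length ℓ) and w = a^ℓ: dsc(L_ℓ) = ℓ + 2 and dsc(L_ℓ ∖ {w}) = 2ℓ + 1. -/

import Mathlib

/-- Deterministic state complexity: the minimal number of states of a complete DFA
accepting `L`. -/
noncomputable def dsc {α : Type} (L : Set (List α)) : ℕ :=
  sInf {n | ∃ M : DFA α (Fin n), M.accepts = L}

/-- Lower bound via pairwise distinguishable words. -/
lemma card_le_of_distinguishing {α : Type} {L : Set (List α)} {n m : ℕ}
    (M : DFA α (Fin m)) (hM : M.accepts = L) (f : Fin n → List α)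
    (hf : ∀ i j : Fin n, i < j → ∃ z, ¬((f i ++ z ∈ L) ↔ (f j ++ z ∈ L))) :
    n ≤ m := by
  have key : ∀ u v : List α, M.eval u = M.eval v → ∀ z, ((u ++ z ∈ L) ↔ (v ++ z ∈ L)) := by
    intro u v huv z
    rw [← hM]
    show M.evalFrom M.start (u ++ z) ∈ M.accept ↔ M.evalFrom M.start (v ++ z) ∈ M.accept
    rw [DFA.evalFrom_of_append, DFA.evalFrom_of_append]
    show M.evalFrom (M.eval u) z ∈ _ ↔ M.evalFrom (M.eval v) z ∈ _
    rw [huv]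
  have hinj : Function.Injective (fun i => M.eval (f i)) := by
    intro i j hij
    by_contra hne
    rcases lt_or_gt_of_ne hne with h | h
    · obtain ⟨z, hz⟩ := hf i j h
      exact hz (key _ _ hij z)
    · obtain ⟨z, hz⟩ := hf j i h
      exact hz ((key _ _ hij z).symm)
  simpa using Fintype.card_le_of_injective _ hinj

section DFA1

variable (ℓ : ℕ)

/-- DFA for `Σ^ℓ` with `ℓ+2` states. -/
def M1 (hℓ : 0 < ℓ) : DFA (Fin 2) (Fin (ℓ + 2)) where
  step := fun s _ => ⟨min (s.val + 1) (ℓ + 1), by omega⟩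
  start := ⟨0, by omega⟩
  accept := {s | s.val = ℓ}

lemma M1_step (hℓ : 0 < ℓ) (s : Fin (ℓ + 2)) (c : Fin 2) :
    (((M1 ℓ hℓ).step s c) : ℕ) = min (s.val + 1) (ℓ + 1) := rfl

lemma M1_eval (hℓ : 0 < ℓ) (w : List (Fin 2)) :
    ((M1 ℓ hℓ).eval w).val = min w.length (ℓ + 1) := by
  induction w using List.reverseRecOn with
  | nil =>
      show (0 : ℕ) = min 0 (ℓ + 1)
      omega
  | append_singleton w c ih =>
      rw [DFA.eval_append_singleton, M1_step, ih]
      simp only [List.length_append, List.length_cons, List.length_nil]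
      omega

lemma M1_accepts (hℓ : 0 < ℓ) :
    (M1 ℓ hℓ).accepts = {w : List (Fin 2) | w.length = ℓ} := by
  ext w
  rw [DFA.mem_accepts]
  change ((M1 ℓ hℓ).eval w).val = ℓ ↔ w.length = ℓ
  rw [M1_eval ℓ hℓ w]
  omega

end DFA1

section DFA2

variable (ℓ : ℕ)

/-- DFA for `Σ^ℓ \ {a^ℓ}` with `2ℓ+1` states. -/
def M2 (hℓ : 0 < ℓ) : DFA (Fin 2) (Fin (2 * ℓ + 1)) where
  step := fun s c =>
    ⟨if s.val < ℓ then
        (if c = 0 then (if s.val + 1 < ℓ then s.val + 1 else 2 * ℓ) else ℓ + s.val)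
      else (if s.val + 1 < 2 * ℓ then s.val + 1 else 2 * ℓ),
      by have := s.isLt; split_ifs <;> omega⟩
  start := ⟨0, by omega⟩
  accept := {s | s.val = 2 * ℓ - 1}

lemma M2_step (hℓ : 0 < ℓ) (s : Fin (2 * ℓ + 1)) (c : Fin 2) :
    (((M2 ℓ hℓ).step s c) : ℕ) =
      if s.val < ℓ then
        (if c = 0 then (if s.val + 1 < ℓ then s.val + 1 else 2 * ℓ) else ℓ + s.val)
      else (if s.val + 1 < 2 * ℓ then s.val + 1 else 2 * ℓ) := rfl

/-- Encoding of the state reached by `w`. -/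
def enc (w : List (Fin 2)) : ℕ :=
  if ℓ < w.length then 2 * ℓ
  else if w = List.replicate w.length 0 then
    (if w.length = ℓ then 2 * ℓ else w.length)
  else ℓ - 1 + w.length

lemma pure_append (w : List (Fin 2)) (c : Fin 2) :
    (w ++ [c] = List.replicate (w.length + 1) 0) ↔
      (w = List.replicate w.length 0 ∧ c = 0) := by
  rw [List.eq_replicate_iff, List.eq_replicate_iff]
  simp only [List.length_append, List.length_cons, List.length_nil, List.mem_append,
    List.mem_cons, List.not_mem_nil, or_false]
  constructor
  · rintro ⟨-, h⟩
    exact ⟨⟨trivial, fun b hb => h b (Or.inl hb)⟩, h c (Or.inr rfl)⟩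
  · rintro ⟨⟨-, h⟩, hc⟩
    refine ⟨trivial, fun b hb => ?_⟩
    rcases hb with hb | hb
    · exact h b hb
    · exact hb ▸ hc

lemma M2_eval (hℓ : 0 < ℓ) (w : List (Fin 2)) :
    ((M2 ℓ hℓ).eval w).val = enc ℓ w := by
  induction w using List.reverseRecOn with
  | nil =>
      show (0 : ℕ) = enc ℓ []
      have h0 : enc ℓ [] = 0 := by
        unfold enc
        rw [if_neg (by simp), if_pos (by simp), if_neg (by simp; omega)]
        rfl
      rw [h0]
  | append_singleton w c ih =>
      rw [DFA.eval_append_singleton, M2_step, ih]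
      have hpa := pure_append w c
      have hlen : (w ++ [c]).length = w.length + 1 := by simp
      conv_rhs => rw [enc, hlen]
      by_cases h1 : ℓ < w.length
      · -- long word: already sink
        have henc : enc ℓ w = 2 * ℓ := by rw [enc, if_pos h1]
        rw [henc, if_pos (by omega : ℓ < w.length + 1)]
        rw [if_neg (by omega : ¬ 2 * ℓ < ℓ), if_neg (by omega)]
      · by_cases h2 : w = List.replicate w.length 0
        · by_cases h3 : w.length = ℓ
          · -- pure of length ℓ: sink
            have henc : enc ℓ w = 2 * ℓ := by
              rw [enc, if_neg h1, if_pos h2, if_pos h3]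
            rw [henc, if_pos (by omega : ℓ < w.length + 1),
              if_neg (by omega : ¬ 2 * ℓ < ℓ), if_neg (by omega)]
          · -- pure, short
            have henc : enc ℓ w = w.length := by
              rw [enc, if_neg h1, if_pos h2, if_neg h3]
            rw [henc, if_neg (by omega : ¬ ℓ < w.length + 1),
              if_pos (by omega : w.length < ℓ)]
            by_cases hc : c = 0
            · rw [if_pos hc, if_pos (hpa.mpr ⟨h2, hc⟩)]
              by_cases h4 : w.length + 1 = ℓ
              · rw [if_pos h4, if_neg (by omega)]
              · rw [if_neg h4, if_pos (by omega)]
            · rw [if_neg hc, if_neg (fun h => hc (hpa.mp h).2)]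
              omega
        · -- impure
          have hw1 : 1 ≤ w.length := by
            rcases Nat.eq_zero_or_pos w.length with h | h
            · exact absurd (by simpa using List.length_eq_zero_iff.mp h) (h ▸ h2)
            · exact h
          have henc : enc ℓ w = ℓ - 1 + w.length := by
            rw [enc, if_neg h1, if_neg h2]
          rw [henc, if_neg (by omega : ¬ ℓ - 1 + w.length < ℓ)]
          by_cases h3 : ℓ < w.length + 1
          · rw [if_pos h3, if_neg (by omega)]
          · rw [if_neg h3, if_neg (fun h => h2 (hpa.mp h).1), if_pos (by omega)]
            omega

lemma M2_accepts (hℓ : 0 < ℓ) :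
    (M2 ℓ hℓ).accepts
      = ({w : List (Fin 2) | w.length = ℓ} \ {List.replicate ℓ (0 : Fin 2)}) := by
  ext w
  rw [DFA.mem_accepts]
  have hL : ((M2 ℓ hℓ).eval w ∈ (M2 ℓ hℓ).accept) ↔ enc ℓ w = 2 * ℓ - 1 := by
    rw [← M2_eval ℓ hℓ w]; exact Iff.rfl
  rw [hL]
  change _ ↔ w ∈ (({w : List (Fin 2) | w.length = ℓ} \ {List.replicate ℓ (0 : Fin 2)}) : Set (List (Fin 2)))
  rw [Set.mem_diff, Set.mem_setOf_eq, Set.mem_singleton_iff, enc]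
  by_cases h1 : ℓ < w.length
  · rw [if_pos h1]
    constructor
    · intro h; omega
    · rintro ⟨h, -⟩; omega
  · rw [if_neg h1]
    by_cases h2 : w = List.replicate w.length 0
    · rw [if_pos h2]
      by_cases h3 : w.length = ℓ
      · rw [if_pos h3]
        constructor
        · intro h; omega
        · rintro ⟨-, hne⟩; exact absurd (h3 ▸ h2) hne
      · rw [if_neg h3]
        constructor
        · intro h; omega
        · rintro ⟨h, -⟩; omega
    · rw [if_neg h2]
      constructor
      · intro h
        have hlen : w.length = ℓ := by omega
        exact ⟨hlen, fun hw => h2 (by rw [hlen]; exact hw)⟩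
      · rintro ⟨h, -⟩; omega

end DFA2

/-- Pure words are never in `Σ^ℓ \ {a^ℓ}`. -/
lemma pure_notin (ℓ m : ℕ) :
    (List.replicate m (0 : Fin 2)) ∉
      ({w : List (Fin 2) | w.length = ℓ} \ {List.replicate ℓ (0 : Fin 2)}) := by
  rintro ⟨h1, h2⟩
  simp only [Set.mem_setOf_eq, List.length_replicate] at h1
  exact h2 (by rw [h1]; rfl)

lemma impure_mem (ℓ : ℕ) (w : List (Fin 2)) (hw : (1 : Fin 2) ∈ w) (hlen : w.length = ℓ) :
    w ∈ ({w : List (Fin 2) | w.length = ℓ} \ {List.replicate ℓ (0 : Fin 2)}) := by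
  refine ⟨hlen, fun h => ?_⟩
  simp only [Set.mem_singleton_iff] at h
  have := List.eq_of_mem_replicate (h ▸ hw)
  exact absurd this (by decide)

lemma notmem_of_len (ℓ : ℕ) (w : List (Fin 2)) (h : w.length ≠ ℓ) :
    w ∉ ({w : List (Fin 2) | w.length = ℓ} \ {List.replicate ℓ (0 : Fin 2)}) := by
  rintro ⟨h1, -⟩; exact h h1

theorem stmt11 (ℓ : ℕ) (hℓ : 0 < ℓ) :
    dsc {w : List (Fin 2) | w.length = ℓ} = ℓ + 2 ∧
    dsc ({w : List (Fin 2) | w.length = ℓ} \ {List.replicate ℓ (0 : Fin 2)}) = 2 * ℓ + 1 := by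
  constructor
  · apply le_antisymm
    · exact Nat.sInf_le ⟨M1 ℓ hℓ, M1_accepts ℓ hℓ⟩
    · refine le_csInf ⟨ℓ + 2, M1 ℓ hℓ, M1_accepts ℓ hℓ⟩ ?_
      rintro m ⟨M, hM⟩
      refine card_le_of_distinguishing M hM (fun i => List.replicate i.val 0) ?_
      intro i j hij
      refine ⟨List.replicate (ℓ - i.val) 0, ?_⟩
      simp only [Set.mem_setOf_eq, List.length_append, List.length_replicate]
      have hi := i.isLt
      have hj := j.isLt
      intro hIff
      have h1 : i.val + (ℓ - i.val) = ℓ := by omega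
      have := hIff.mp h1
      omega
  · apply le_antisymm
    · exact Nat.sInf_le ⟨M2 ℓ hℓ, M2_accepts ℓ hℓ⟩
    · refine le_csInf ⟨2 * ℓ + 1, M2 ℓ hℓ, M2_accepts ℓ hℓ⟩ ?_
      rintro m ⟨M, hM⟩
      refine card_le_of_distinguishing M hM
        (fun k => if k.val ≤ ℓ then List.replicate k.val 0
          else 1 :: List.replicate (k.val - ℓ - 1) 0) ?_
      intro i j hij
      have hi := i.isLt
      have hj := j.isLt
      by_cases hjl : j.val ≤ ℓ
      · -- both pure, i < j ≤ ℓ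
        have hil : i.val ≤ ℓ := by omega
        rw [if_pos hil, if_pos hjl]
        refine ⟨1 :: List.replicate (ℓ - 1 - i.val) 0, fun hIff => ?_⟩
        have hmem : List.replicate i.val (0 : Fin 2) ++ 1 :: List.replicate (ℓ - 1 - i.val) 0
            ∈ ({w : List (Fin 2) | w.length = ℓ} \ {List.replicate ℓ (0 : Fin 2)}) := by
          refine impure_mem ℓ _ ?_ ?_
          · exact List.mem_append_right _ List.mem_cons_self
          · simp only [List.length_append, List.length_cons, List.length_replicate]
            omega
        have hnot : List.replicate j.val (0 : Fin 2) ++ 1 :: List.replicate (ℓ - 1 - i.val) 0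
            ∉ ({w : List (Fin 2) | w.length = ℓ} \ {List.replicate ℓ (0 : Fin 2)}) := by
          refine notmem_of_len ℓ _ ?_
          simp only [List.length_append, List.length_cons, List.length_replicate]
          omega
        exact hnot (hIff.mp hmem)
      · by_cases hil : i.val ≤ ℓ
        · -- i pure, j impure
          rw [if_pos hil, if_neg hjl]
          refine ⟨List.replicate (2 * ℓ - j.val) 0, fun hIff => ?_⟩
          have hmem : (1 : Fin 2) :: List.replicate (j.val - ℓ - 1) 0
                ++ List.replicate (2 * ℓ - j.val) 0
              ∈ ({w : List (Fin 2) | w.length = ℓ} \ {List.replicate ℓ (0 : Fin 2)}) := by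
            refine impure_mem ℓ _ List.mem_cons_self ?_
            simp only [List.length_cons, List.length_append, List.length_replicate]
            omega
          have hnot : List.replicate i.val (0 : Fin 2) ++ List.replicate (2 * ℓ - j.val) 0
              ∉ ({w : List (Fin 2) | w.length = ℓ} \ {List.replicate ℓ (0 : Fin 2)}) := by
            rw [← List.replicate_add]
            exact pure_notin ℓ _
          exact hnot (hIff.mpr hmem)
        · -- both impure, ℓ < i < j
          rw [if_neg hil, if_neg hjl]
          refine ⟨List.replicate (2 * ℓ - i.val) 0, fun hIff => ?_⟩
          have hmem : (1 : Fin 2) :: List.replicate (i.val - ℓ - 1) 0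
                ++ List.replicate (2 * ℓ - i.val) 0
              ∈ ({w : List (Fin 2) | w.length = ℓ} \ {List.replicate ℓ (0 : Fin 2)}) := by
            refine impure_mem ℓ _ List.mem_cons_self ?_
            simp only [List.length_cons, List.length_append, List.length_replicate]
            omega
          have hnot : (1 : Fin 2) :: List.replicate (j.val - ℓ - 1) 0
                ++ List.replicate (2 * ℓ - i.val) 0
              ∉ ({w : List (Fin 2) | w.length = ℓ} \ {List.replicate ℓ (0 : Fin 2)}) := by
            refine notmem_of_len ℓ _ ?_
            simp only [List.length_cons, List.length_append, List.length_replicate]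
            omega
          exact hnot (hIff.mp hmem)
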